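/- Let g be even, G = ℤ/2ℤ × S_g acting on {1,…,2g} by: (ε,σ) sends i ∈ {1,…,g} to σ(i) if ε = 0 and to σ(i)+g if ε = 1, and similarly on {g+1,…,2g} (indices mod 2g, with the involution τ = (1,id) acting as i ↦ i+g mod 2g). Let π₁,…,π_{2g} be distinct nonzero complex numbers with |π_i| = q^{1/2}, π_{i+g} = q/π_i for 1 ≤ i ≤ g, permuted by G compatibly with its action on indices, and satisfying π₁⋯π_g = q^{g/2}. If I ⊆ {1,…,2g} has cardinality 2k, satisfies ∏_{i∈I} π_i = q^k, and the G-orbit of I is not the orbit of I₀ = {1,…,g}, then I is stable under i ↦ i+g mod 2g. -/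

import Mathlib

def weilAct (g : ℕ) (ε : Bool) (σ : Equiv.Perm (Fin g)) : Equiv.Perm (Fin g ⊕ Fin g) :=
  (Equiv.sumCongr σ σ).trans (if ε then Equiv.sumComm (Fin g) (Fin g) else Equiv.refl _)

lemma image_swap_mem {α : Type*} [DecidableEq α] {s : Finset α} {a b : α}
    (ha : a ∈ s) (hb : b ∉ s) : s.image ⇑(Equiv.swap a b) = insert b (s.erase a) := by
  ext y
  simp only [Finset.mem_image, Finset.mem_insert, Finset.mem_erase]
  constructor
  · rintro ⟨z, hz, rfl⟩
    rcases eq_or_ne z a with rfl | hza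
    · left; simp
    · right
      have hzb : z ≠ b := fun h => hb (h ▸ hz)
      rw [Equiv.swap_apply_of_ne_of_ne hza hzb]
      exact ⟨hza, hz⟩
  · rintro (rfl | ⟨hya, hy⟩)
    · exact ⟨a, ha, Equiv.swap_apply_left a y⟩
    · exact ⟨y, hy, Equiv.swap_apply_of_ne_of_ne hya (fun h => hb (h ▸ hy))⟩

lemma image_swap_not_mem {α : Type*} [DecidableEq α] {s : Finset α} {a b : α}
    (ha : a ∉ s) (hb : b ∉ s) : s.image ⇑(Equiv.swap a b) = s := by
  rw [show s.image ⇑(Equiv.swap a b) = s.image id from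
    Finset.image_congr fun x hx => Equiv.swap_apply_of_ne_of_ne
      (fun h => ha (h ▸ hx)) (fun h => hb (h ▸ hx)), Finset.image_id]

lemma prod_sum_union {g : ℕ} (π : Fin g ⊕ Fin g → ℂ) (C D : Finset (Fin g)) :
    ∏ j ∈ (C.image Sum.inl ∪ D.image Sum.inr), π j
      = (∏ i ∈ C, π (Sum.inl i)) * (∏ i ∈ D, π (Sum.inr i)) := by
  rw [Finset.prod_union (by simp [Finset.disjoint_left]),
    Finset.prod_image (fun a _ b _ h => Sum.inl_injective h),
    Finset.prod_image (fun a _ b _ h => Sum.inr_injective h)]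

lemma aux_key {g : ℕ} {q : ℝ} {π : Fin g ⊕ Fin g → ℂ}
    (hGal : ∀ (ε : Bool) (σ : Equiv.Perm (Fin g)) (f : Fin g ⊕ Fin g → ℕ) (k : ℕ),
      (∏ i, π i ^ f i) = (q : ℂ) ^ k → (∏ i, π (weilAct g ε σ i) ^ f i) = (q : ℂ) ^ k)
    (C D : Finset (Fin g)) (t : ℕ)
    (h : (∏ i ∈ C, π (Sum.inl i)) * (∏ i ∈ D, π (Sum.inr i)) = (q : ℂ) ^ t)
    (σ : Equiv.Perm (Fin g)) :
    (∏ i ∈ C.image σ, π (Sum.inl i)) * (∏ i ∈ D.image σ, π (Sum.inr i)) = (q : ℂ) ^ t := by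
  classical
  set J := C.image Sum.inl ∪ D.image Sum.inr with hJdef
  set f : Fin g ⊕ Fin g → ℕ := fun j => if j ∈ J then 1 else 0 with hfdef
  have hf : ∀ (π' : Fin g ⊕ Fin g → ℂ), ∏ j, π' j ^ f j = ∏ j ∈ J, π' j := by
    intro π'
    calc ∏ j, π' j ^ f j = ∏ j, (if j ∈ J then π' j else 1) :=
          Finset.prod_congr rfl (by intro j _; simp only [hfdef]; split_ifs <;> simp)
      _ = ∏ j ∈ J, π' j := by rw [Finset.prod_ite_mem, Finset.univ_inter]
  have h1 : ∏ j, π j ^ f j = (q : ℂ) ^ t := by rw [hf, hJdef, prod_sum_union]; exact h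
  have h2 := hGal false σ f t h1
  have h3 : ∀ i : Fin g, weilAct g false σ (Sum.inl i) = Sum.inl (σ i) := by
    intro i; simp [weilAct]
  have h4 : ∀ i : Fin g, weilAct g false σ (Sum.inr i) = Sum.inr (σ i) := by
    intro i; simp [weilAct]
  rw [hf (fun j => π (weilAct g false σ j)), hJdef, prod_sum_union] at h2
  rw [Finset.prod_image (fun a _ b _ hab => σ.injective hab),
    Finset.prod_image (fun a _ b _ hab => σ.injective hab)]
  simp only [h3, h4] at h2
  exact h2

theorem stmt9 (g m : ℕ) (hgm : g = 2 * m) (q : ℝ) (hq : 1 < q)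
    (π : Fin g ⊕ Fin g → ℂ)
    (hinj : Function.Injective π)
    (hne : ∀ i, π i ≠ 0)
    (habs : ∀ i, ‖π i‖ = Real.sqrt q)
    (hconj : ∀ i : Fin g, π (Sum.inr i) = (q : ℂ) / π (Sum.inl i))
    (hGal : ∀ (ε : Bool) (σ : Equiv.Perm (Fin g)) (f : Fin g ⊕ Fin g → ℕ) (k : ℕ),
      (∏ i, π i ^ f i) = (q : ℂ) ^ k → (∏ i, π (weilAct g ε σ i) ^ f i) = (q : ℂ) ^ k)
    (hprod : (∏ i : Fin g, π (Sum.inl i)) = (q : ℂ) ^ m)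
    (I : Finset (Fin g ⊕ Fin g)) (k : ℕ)
    (hcard : I.card = 2 * k)
    (hrel : (∏ i ∈ I, π i) = (q : ℂ) ^ k)
    (horbit : ¬ ∃ (ε : Bool) (σ : Equiv.Perm (Fin g)),
      ((Finset.univ : Finset (Fin g)).image Sum.inl).image (weilAct g ε σ) = I) :
    I.image (Equiv.sumComm (Fin g) (Fin g)) = I := by
  classical
  have hq0 : (q : ℂ) ≠ 0 := by
    simp only [ne_eq, Complex.ofReal_eq_zero]
    exact ne_of_gt (lt_trans zero_lt_one hq)
  set A : Finset (Fin g) := Finset.univ.filter (fun i => Sum.inl i ∈ I) with hA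
  set B : Finset (Fin g) := Finset.univ.filter (fun i => Sum.inr i ∈ I) with hB
  have hIeq : I = A.image Sum.inl ∪ B.image Sum.inr := by
    ext j
    cases j <;> simp [hA, hB]
  suffices hAB : A = B by
    have hmem : ∀ i, Sum.inl i ∈ I ↔ Sum.inr i ∈ I := by
      intro i
      have := Finset.ext_iff.mp hAB i
      simpa [hA, hB] using this
    have himg : ∀ j, (j ∈ I.image ⇑(Equiv.sumComm (Fin g) (Fin g)) ↔ Sum.swap j ∈ I) := by
      intro j
      rw [Finset.mem_image]
      constructor
      · rintro ⟨x, hx, rfl⟩; simpa [Equiv.sumComm_apply, Sum.swap_swap] using hx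
      · intro h; exact ⟨Sum.swap j, h, by simp [Equiv.sumComm_apply, Sum.swap_swap]⟩
    ext j
    rw [himg]
    cases j with
    | inl i => exact (hmem i).symm
    | inr i => exact hmem i
  -- main part : prove A = B
  by_contra hAB
  set C : Finset (Fin g) := A \ B with hC
  set D : Finset (Fin g) := B \ A with hD
  have hCDdisj : Disjoint C D := by
    rw [Finset.disjoint_left]
    intro a haC haD
    exact (Finset.mem_sdiff.mp haD).2 (Finset.mem_sdiff.mp haC).1
  have hCDne : C ≠ ∅ ∨ D ≠ ∅ := by
    by_contra h
    push_neg at h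
    exact hAB (Finset.Subset.antisymm
      (fun a ha => by_contra fun hb => (Finset.eq_empty_iff_forall_notMem.mp h.1) a
        (Finset.mem_sdiff.mpr ⟨ha, hb⟩))
      (fun a ha => by_contra fun hb => (Finset.eq_empty_iff_forall_notMem.mp h.2) a
        (Finset.mem_sdiff.mpr ⟨ha, hb⟩)))
  -- cardinalities
  set n := (A ∩ B).card with hn
  have hcardAB : A.card + B.card = 2 * k := by
    rw [← hcard, hIeq, Finset.card_union_of_disjoint (by simp [Finset.disjoint_left]),
      Finset.card_image_of_injective _ Sum.inl_injective,
      Finset.card_image_of_injective _ Sum.inr_injective]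
  have hnA : n + C.card = A.card := by
    rw [hn, hC, add_comm]; exact Finset.card_sdiff_add_card_inter A B
  have hnB : n + D.card = B.card := by
    rw [hn, hD, add_comm, Finset.inter_comm]; exact Finset.card_sdiff_add_card_inter B A
  have hnk : n ≤ k := by omega
  set t := k - n with ht
  have hkt : k = n + t := by omega
  have hCDcard : C.card + D.card = 2 * t := by omega
  -- the key relation for C, D
  have hsplitI : ∏ i ∈ I, π i = (∏ i ∈ A, π (Sum.inl i)) * (∏ i ∈ B, π (Sum.inr i)) := by
    rw [hIeq, prod_sum_union]
  have hAun : A ∩ B ∪ C = A := by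
    ext a
    simp only [hC, Finset.mem_union, Finset.mem_inter, Finset.mem_sdiff]
    tauto
  have hBun : A ∩ B ∪ D = B := by
    ext a
    simp only [hD, Finset.mem_union, Finset.mem_inter, Finset.mem_sdiff]
    tauto
  have hdAC : Disjoint (A ∩ B) C := by
    rw [Finset.disjoint_left]
    intro a ha hb
    exact (Finset.mem_sdiff.mp hb).2 (Finset.mem_inter.mp ha).2
  have hdBD : Disjoint (A ∩ B) D := by
    rw [Finset.disjoint_left]
    intro a ha hb
    exact (Finset.mem_sdiff.mp hb).2 (Finset.mem_inter.mp ha).1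
  have hAsplit : ∏ i ∈ A, π (Sum.inl i)
      = (∏ i ∈ A ∩ B, π (Sum.inl i)) * ∏ i ∈ C, π (Sum.inl i) := by
    rw [← Finset.prod_union hdAC, hAun]
  have hBsplit : ∏ i ∈ B, π (Sum.inr i)
      = (∏ i ∈ A ∩ B, π (Sum.inr i)) * ∏ i ∈ D, π (Sum.inr i) := by
    rw [← Finset.prod_union hdBD, hBun]
  have hinter : (∏ i ∈ A ∩ B, π (Sum.inl i)) * (∏ i ∈ A ∩ B, π (Sum.inr i)) = (q : ℂ) ^ n := by
    rw [← Finset.prod_mul_distrib]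
    calc ∏ i ∈ A ∩ B, π (Sum.inl i) * π (Sum.inr i) = ∏ _i ∈ A ∩ B, (q : ℂ) :=
          Finset.prod_congr rfl fun i _ => by
            rw [hconj i, mul_comm, div_mul_cancel₀ _ (hne (Sum.inl i))]
      _ = (q : ℂ) ^ n := by rw [Finset.prod_const, hn]
  have hCDrel : (∏ i ∈ C, π (Sum.inl i)) * (∏ i ∈ D, π (Sum.inr i)) = (q : ℂ) ^ t := by
    apply mul_left_cancel₀ (pow_ne_zero n hq0)
    calc (q : ℂ) ^ n * ((∏ i ∈ C, π (Sum.inl i)) * (∏ i ∈ D, π (Sum.inr i)))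
        = ∏ i ∈ I, π i := by rw [hsplitI, hAsplit, hBsplit, ← hinter]; ring
      _ = (q : ℂ) ^ k := hrel
      _ = (q : ℂ) ^ n * (q : ℂ) ^ t := by rw [← pow_add, ← hkt]
  -- case distinction
  by_cases hU : C ∪ D = Finset.univ
  · -- C ∪ D = univ
    by_cases hCe : C = ∅
    · -- D = univ, I is the right half
      have hDu : D = Finset.univ := by
        rw [hCe, Finset.empty_union] at hU; exact hU
      have hAe : A = ∅ := by
        rw [Finset.eq_empty_iff_forall_notMem]
        intro a ha
        have : a ∈ D := hDu ▸ Finset.mem_univ a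
        exact (Finset.mem_sdiff.mp this).2 ha
      have hBu : B = Finset.univ := by
        apply Finset.eq_univ_of_forall
        intro b
        have : b ∈ D := hDu ▸ Finset.mem_univ b
        exact (Finset.mem_sdiff.mp this).1
      refine horbit ⟨true, 1, ?_⟩
      rw [hIeq, hAe, hBu, Finset.image_empty, Finset.empty_union, Finset.image_image]
      apply Finset.image_congr
      intro x _
      simp [weilAct]
    · by_cases hDe : D = ∅
      · -- C = univ, I is the left half
        have hCu : C = Finset.univ := by
          rw [hDe, Finset.union_empty] at hU; exact hU
        have hBe : B = ∅ := by
          rw [Finset.eq_empty_iff_forall_notMem]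
          intro b hb
          have : b ∈ C := hCu ▸ Finset.mem_univ b
          exact (Finset.mem_sdiff.mp this).2 hb
        have hAu : A = Finset.univ := by
          apply Finset.eq_univ_of_forall
          intro a
          have : a ∈ C := hCu ▸ Finset.mem_univ a
          exact (Finset.mem_sdiff.mp this).1
        refine horbit ⟨false, 1, ?_⟩
        rw [hIeq, hBe, Finset.image_empty, Finset.union_empty, hAu, Finset.image_image]
        apply Finset.image_congr
        intro x _
        simp [weilAct]
      · -- both nonempty: derive π (inl d) = - π (inl c) for all pairs
        obtain ⟨c, hc⟩ := Finset.nonempty_iff_ne_empty.mpr hCe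
        obtain ⟨d, hd⟩ := Finset.nonempty_iff_ne_empty.mpr hDe
        have hneg : ∀ c' ∈ C, ∀ d' ∈ D, π (Sum.inl d') = - π (Sum.inl c') := by
          intro c' hc' d' hd'
          have hcd : c' ∉ D := Finset.disjoint_left.mp hCDdisj hc'
          have hdc : d' ∉ C := Finset.disjoint_right.mp hCDdisj hd'
          have h1 := aux_key hGal C D t hCDrel (Equiv.swap c' d')
          rw [image_swap_mem hc' hdc] at h1
          rw [show D.image ⇑(Equiv.swap c' d') = insert c' (D.erase d') from by
            rw [Equiv.swap_comm]; exact image_swap_mem hd' hcd] at h1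
          rw [Finset.prod_insert (fun h => hdc (Finset.erase_subset _ _ h)),
            Finset.prod_insert (fun h => hcd (Finset.erase_subset _ _ h))] at h1
          have h2 : (π (Sum.inl c') * ∏ i ∈ C.erase c', π (Sum.inl i)) *
              (π (Sum.inr d') * ∏ i ∈ D.erase d', π (Sum.inr i)) = (q : ℂ) ^ t := by
            rw [Finset.mul_prod_erase C (fun i => π (Sum.inl i)) hc',
              Finset.mul_prod_erase D (fun i => π (Sum.inr i)) hd']
            exact hCDrel
          set PC := ∏ i ∈ C.erase c', π (Sum.inl i) with hPC
          set PD := ∏ i ∈ D.erase d', π (Sum.inr i) with hPD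
          have hX : PC * PD ≠ 0 := by
            intro h0
            apply pow_ne_zero t hq0
            rw [← h2]
            rcases mul_eq_zero.mp h0 with h0 | h0 <;> rw [h0] <;> ring
          have h3 : (π (Sum.inl d') * π (Sum.inr c')) * (PC * PD)
              = (π (Sum.inl c') * π (Sum.inr d')) * (PC * PD) := by
            calc (π (Sum.inl d') * π (Sum.inr c')) * (PC * PD)
                = (π (Sum.inl d') * PC) * (π (Sum.inr c') * PD) := by ring
              _ = (q : ℂ) ^ t := h1
              _ = (π (Sum.inl c') * PC) * (π (Sum.inr d') * PD) := h2.symm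
              _ = (π (Sum.inl c') * π (Sum.inr d')) * (PC * PD) := by ring
          have h4 := mul_right_cancel₀ hX h3
          have hc0 := hne (Sum.inl c')
          have hd0 := hne (Sum.inl d')
          have e1 : π (Sum.inr c') * π (Sum.inl c') = (q : ℂ) := by
            rw [hconj c', div_mul_cancel₀ _ hc0]
          have e2 : π (Sum.inr d') * π (Sum.inl d') = (q : ℂ) := by
            rw [hconj d', div_mul_cancel₀ _ hd0]
          have h5q : (q : ℂ) * π (Sum.inl d') ^ 2 = (q : ℂ) * π (Sum.inl c') ^ 2 := by
            linear_combination (π (Sum.inl c') * π (Sum.inl d')) * h4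
              - π (Sum.inl d') ^ 2 * e1 + π (Sum.inl c') ^ 2 * e2
          have h5 : π (Sum.inl d') ^ 2 = π (Sum.inl c') ^ 2 := mul_left_cancel₀ hq0 h5q
          have h6 : (π (Sum.inl d') - π (Sum.inl c')) * (π (Sum.inl d') + π (Sum.inl c')) = 0 := by
            linear_combination h5
          rcases mul_eq_zero.mp h6 with h7 | h7
          · exfalso
            have : Sum.inl d' = (Sum.inl c' : Fin g ⊕ Fin g) := hinj (by linear_combination h7)
            have : d' = c' := Sum.inl_injective this
            exact hdc (this ▸ hc')
          · linear_combination h7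
        -- hence C and D are singletons
        have hCsing : C = {c} := by
          rw [Finset.eq_singleton_iff_unique_mem]
          refine ⟨hc, fun x hx => ?_⟩
          have h1 := hneg x hx d hd
          have h2 := hneg c hc d hd
          have : π (Sum.inl x) = π (Sum.inl c) := by linear_combination h1 - h2
          exact Sum.inl_injective (hinj this)
        have hDsing : D = {d} := by
          rw [Finset.eq_singleton_iff_unique_mem]
          refine ⟨hd, fun x hx => ?_⟩
          have h1 := hneg c hc x hx
          have h2 := hneg c hc d hd
          have : π (Sum.inl x) = π (Sum.inl d) := by linear_combination h1 - h2
          exact Sum.inl_injective (hinj this)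
        have ht1 : t = 1 := by
          have : C.card = 1 := by rw [hCsing]; simp
          have : D.card = 1 := by rw [hDsing]; simp
          omega
        rw [hCsing, hDsing, ht1, Finset.prod_singleton, Finset.prod_singleton, pow_one,
          hconj d] at hCDrel
        have hdq : π (Sum.inl d) ≠ 0 := hne (Sum.inl d)
        have : π (Sum.inl c) = π (Sum.inl d) := by
          apply mul_right_cancel₀ hq0
          have e2 : (q : ℂ) / π (Sum.inl d) * π (Sum.inl d) = (q : ℂ) :=
            div_mul_cancel₀ _ hdq
          linear_combination π (Sum.inl d) * hCDrel - π (Sum.inl c) * e2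
        have : c = d := Sum.inl_injective (hinj this)
        exact (Finset.disjoint_left.mp hCDdisj hc) (this ▸ hd)
  · -- C ∪ D ≠ univ : pick x outside and e inside, swap them
    have hx : ∃ x, x ∉ C ∪ D := by
      by_contra h
      push_neg at h
      exact hU (Finset.eq_univ_of_forall h)
    obtain ⟨x, hx⟩ := hx
    have hxC : x ∉ C := fun h => hx (Finset.mem_union_left _ h)
    have hxD : x ∉ D := fun h => hx (Finset.mem_union_right _ h)
    rcases hCDne with hCe | hDe
    · obtain ⟨e, he⟩ := Finset.nonempty_iff_ne_empty.mpr hCe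
      have heD : e ∉ D := Finset.disjoint_left.mp hCDdisj he
      have h1 := aux_key hGal C D t hCDrel (Equiv.swap e x)
      rw [image_swap_mem he hxC, image_swap_not_mem heD hxD,
        Finset.prod_insert (fun h => hxC (Finset.erase_subset _ _ h))] at h1
      have h2 : (π (Sum.inl e) * ∏ i ∈ C.erase e, π (Sum.inl i)) *
          (∏ i ∈ D, π (Sum.inr i)) = (q : ℂ) ^ t := by
        rw [Finset.mul_prod_erase C (fun i => π (Sum.inl i)) he]; exact hCDrel
      set Y := (∏ i ∈ C.erase e, π (Sum.inl i)) * (∏ i ∈ D, π (Sum.inr i)) with hY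
      have h1' : π (Sum.inl x) * Y = (q : ℂ) ^ t := by rw [hY, ← mul_assoc]; exact h1
      have h2' : π (Sum.inl e) * Y = (q : ℂ) ^ t := by rw [hY, ← mul_assoc]; exact h2
      have hY0 : Y ≠ 0 := right_ne_zero_of_mul (h2' ▸ pow_ne_zero t hq0)
      have : π (Sum.inl x) = π (Sum.inl e) := mul_right_cancel₀ hY0 (h1'.trans h2'.symm)
      exact hxC ((Sum.inl_injective (hinj this)) ▸ he)
    · obtain ⟨e, he⟩ := Finset.nonempty_iff_ne_empty.mpr hDe
      have heC : e ∉ C := Finset.disjoint_right.mp hCDdisj he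
      have h1 := aux_key hGal C D t hCDrel (Equiv.swap e x)
      rw [image_swap_mem he hxD, image_swap_not_mem heC hxC,
        Finset.prod_insert (fun h => hxD (Finset.erase_subset _ _ h))] at h1
      have h2 : (∏ i ∈ C, π (Sum.inl i)) *
          (π (Sum.inr e) * ∏ i ∈ D.erase e, π (Sum.inr i)) = (q : ℂ) ^ t := by
        rw [Finset.mul_prod_erase D (fun i => π (Sum.inr i)) he]; exact hCDrel
      set Y := (∏ i ∈ C, π (Sum.inl i)) * (∏ i ∈ D.erase e, π (Sum.inr i)) with hY
      have h1' : π (Sum.inr x) * Y = (q : ℂ) ^ t := by rw [hY]; rw [← h1]; ring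
      have h2' : π (Sum.inr e) * Y = (q : ℂ) ^ t := by rw [hY]; rw [← h2]; ring
      have hY0 : Y ≠ 0 := right_ne_zero_of_mul (h2' ▸ pow_ne_zero t hq0)
      have : π (Sum.inr x) = π (Sum.inr e) := mul_right_cancel₀ hY0 (h1'.trans h2'.symm)
      exact hxD ((Sum.inr_injective (hinj this)) ▸ he)
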